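/- arXiv:1503.08690 — 3 statements merged into one kernel-verified Lean document; each statement's English description precedes it below -/
import Mathlib

section
/- (Welch bound) If {f_1,...,f_N} is a uniform (N,d) Parseval frame with N ≥ d, then M_∞(F) ≥ sqrt((N−d)/(d(N−1))), with equality if and only if F is equiangular. -/
set_option maxHeartbeats 1600000


/-- (Welch bound) A uniform `(N,d)` Parseval frame `F` (each `‖f_i‖² = d/N`) satisfies
`M_∞(F) = (N/d)·max_{k≠l}‖⟨f_k,f_l⟩‖ ≥ √((N-d)/(d(N-1)))`, with equality
iff `F` is equiangular. -/
theorem welch_bound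
    {𝕜 : Type*} [RCLike 𝕜] {H : Type*} [NormedAddCommGroup H] [InnerProductSpace 𝕜 H]
    [FiniteDimensional 𝕜 H] {N d : ℕ} (hd : 0 < d) (hdN : d ≤ N)
    (hdim : Module.finrank 𝕜 H = d)
    (f : Fin N → H)
    (hparseval : ∀ x : H, ∑ i : Fin N, ‖(inner 𝕜 (f i) x : 𝕜)‖ ^ 2 = ‖x‖ ^ 2)
    (huniform : ∀ i, ‖f i‖ ^ 2 = (d : ℝ) / N) :
    ((N : ℝ) / d) * sSup {x : ℝ | ∃ k l : Fin N, k ≠ l ∧ x = ‖(inner 𝕜 (f k) (f l) : 𝕜)‖}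
      ≥ Real.sqrt (((N : ℝ) - d) / (d * ((N : ℝ) - 1))) ∧
    (((N : ℝ) / d) * sSup {x : ℝ | ∃ k l : Fin N, k ≠ l ∧ x = ‖(inner 𝕜 (f k) (f l) : 𝕜)‖}
        = Real.sqrt (((N : ℝ) - d) / (d * ((N : ℝ) - 1))) ↔
      ∃ c : ℝ, ∀ i j : Fin N, i ≠ j → ‖(inner 𝕜 (f i) (f j) : 𝕜)‖ = c) := by
  set g : Fin N × Fin N → ℝ := fun p => ‖(inner 𝕜 (f p.1) (f p.2) : 𝕜)‖ with hg
  set T : Set ℝ := {x : ℝ | ∃ k l : Fin N, k ≠ l ∧ x = ‖(inner 𝕜 (f k) (f l) : 𝕜)‖} with hT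
  have hd0 : (0:ℝ) < (d:ℝ) := by exact_mod_cast hd
  have hNd : (d:ℝ) ≤ (N:ℝ) := by exact_mod_cast hdN
  -- trivial case N ≤ 1
  rcases le_or_gt N 1 with hN1 | hN1
  · have hN : N = 1 := le_antisymm hN1 (le_trans hd hdN)
    have hd1 : d = 1 := le_antisymm (hN ▸ hdN) hd
    have hTe : T = ∅ := by
      ext x; simp only [hT, Set.mem_setOf_eq, Set.mem_empty_iff_false, iff_false]
      rintro ⟨k, l, hkl, -⟩
      exact hkl (Fin.ext (by omega))
    have hR : (((N : ℝ) - d) / (d * ((N : ℝ) - 1))) = 0 := by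
      subst hN; subst hd1; norm_num
    rw [hTe, hR, Real.sSup_empty, Real.sqrt_zero, mul_zero]
    exact ⟨le_refl 0, ⟨fun _ => ⟨0, fun i j hij => absurd (Fin.ext (by omega)) hij⟩,
      fun _ => rfl⟩⟩
  -- main case N ≥ 2
  have hN0 : (0:ℝ) < (N:ℝ) := by positivity
  have hN1' : (1:ℝ) < (N:ℝ) := by exact_mod_cast hN1
  have hNm1 : (0:ℝ) < (N:ℝ) - 1 := by linarith
  -- the set T is finite and nonempty
  have hTfin : T.Finite := by
    apply Set.Finite.subset (Set.finite_range g)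
    rintro x ⟨k, l, -, rfl⟩
    exact ⟨(k, l), rfl⟩
  obtain ⟨i0, i1, hi01⟩ : ∃ i0 i1 : Fin N, i0 ≠ i1 :=
    ⟨⟨0, by omega⟩, ⟨1, by omega⟩, by simp [Fin.ext_iff]⟩
  have hTne : T.Nonempty := ⟨g (i0, i1), i0, i1, hi01, rfl⟩
  have hTbdd : BddAbove T := hTfin.bddAbove
  set m : ℝ := sSup T with hm
  have hmem : m ∈ T := hTne.csSup_mem hTfin
  have hub : ∀ x ∈ T, x ≤ m := fun x hx => le_csSup hTbdd hx
  have hm0 : 0 ≤ m := by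
    obtain ⟨k, l, -, hx⟩ := hmem; rw [hx]; positivity
  -- key double sum
  have hsum : ∑ j : Fin N, ∑ i : Fin N, g (i, j) ^ 2 = (d : ℝ) := by
    have : ∀ j : Fin N, ∑ i : Fin N, g (i, j) ^ 2 = (d:ℝ)/N := fun j => by
      rw [show (∑ i : Fin N, g (i, j) ^ 2) = ∑ i : Fin N, ‖(inner 𝕜 (f i) (f j) : 𝕜)‖ ^ 2 from rfl,
        hparseval (f j), huniform j]
    rw [Finset.sum_congr rfl fun j _ => this j, Finset.sum_const, Finset.card_univ,
      Fintype.card_fin, nsmul_eq_mul]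
    field_simp
  have hprod : ∑ p ∈ Finset.univ ×ˢ (Finset.univ : Finset (Fin N)), g p ^ 2 = (d : ℝ) := by
    rw [Finset.sum_product]
    rw [Finset.sum_comm]
    exact hsum
  have hdiag : ∑ p ∈ (Finset.univ : Finset (Fin N)).diag, g p ^ 2 = (d:ℝ)^2 / N := by
    rw [Finset.sum_diag]
    have : ∀ i : Fin N, g (i, i) ^ 2 = ((d:ℝ)/N)^2 := fun i => by
      have h1 : g (i, i) = ‖f i‖ ^ 2 := by
        simp only [hg]
        rw [inner_self_eq_norm_sq_to_K]
        rw [norm_pow, RCLike.norm_ofReal, abs_norm]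
      rw [h1, huniform i]
    rw [Finset.sum_congr rfl fun i _ => this i, Finset.sum_const, Finset.card_univ,
      Fintype.card_fin, nsmul_eq_mul]
    field_simp
  have hoff : ∑ p ∈ (Finset.univ : Finset (Fin N)).offDiag, g p ^ 2
      = (d:ℝ) * ((N:ℝ) - d) / N := by
    have hsplit : ∑ p ∈ (Finset.univ : Finset (Fin N)).diag, g p ^ 2
        + ∑ p ∈ (Finset.univ : Finset (Fin N)).offDiag, g p ^ 2 = (d : ℝ) := by
      rw [← Finset.sum_union (Finset.disjoint_diag_offDiag _), Finset.diag_union_offDiag]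
      exact hprod
    rw [hdiag] at hsplit
    field_simp at hsplit ⊢
    linarith
  have hcard : ((Finset.univ : Finset (Fin N)).offDiag.card : ℝ) = (N:ℝ) * (N:ℝ) - N := by
    rw [Finset.offDiag_card, Finset.card_univ, Fintype.card_fin]
    have : N ≤ N * N := Nat.le_mul_of_pos_left N (by omega)
    push_cast [Nat.cast_sub this]
    ring
  have hgle : ∀ p ∈ (Finset.univ : Finset (Fin N)).offDiag, g p ≤ m := by
    intro p hp
    rw [Finset.mem_offDiag] at hp
    exact hub _ ⟨p.1, p.2, hp.2.2, rfl⟩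
  have hg0 : ∀ p : Fin N × Fin N, 0 ≤ g p := fun p => norm_nonneg _
  have hoffle : ∑ p ∈ (Finset.univ : Finset (Fin N)).offDiag, g p ^ 2
      ≤ ((N:ℝ) * (N:ℝ) - N) * m ^ 2 := by
    rw [← hcard]
    calc ∑ p ∈ (Finset.univ : Finset (Fin N)).offDiag, g p ^ 2
        ≤ ∑ _p ∈ (Finset.univ : Finset (Fin N)).offDiag, m ^ 2 :=
          Finset.sum_le_sum fun p hp => pow_le_pow_left₀ (hg0 p) (hgle p hp) 2
      _ = _ := by rw [Finset.sum_const, nsmul_eq_mul]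
  -- so m^2 ≥ K
  have hK : (d:ℝ) * ((N:ℝ) - d) / ((N:ℝ) * (N:ℝ) * ((N:ℝ) - 1)) ≤ m ^ 2 := by
    rw [hoff] at hoffle
    rw [div_le_iff₀ (by positivity)]
    have h3 : (d:ℝ) * ((N:ℝ) - d) ≤ ((N:ℝ) * (N:ℝ) - N) * m ^ 2 * N := by
      have h4 := mul_le_mul_of_nonneg_right hoffle hN0.le
      rwa [div_mul_cancel₀ _ (ne_of_gt hN0)] at h4
    nlinarith [h3]
  have hR0 : (0:ℝ) ≤ ((N:ℝ) - d) / ((d:ℝ) * ((N:ℝ) - 1)) := by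
    apply div_nonneg (by linarith) (by positivity)
  -- main inequality
  have hsq : ((N:ℝ) - d) / ((d:ℝ) * ((N:ℝ) - 1)) ≤ ((N:ℝ)/d * m) ^ 2 := by
    have : ((N:ℝ)/d)^2 * ((d:ℝ) * ((N:ℝ) - d) / ((N:ℝ) * (N:ℝ) * ((N:ℝ) - 1)))
        = ((N:ℝ) - d) / ((d:ℝ) * ((N:ℝ) - 1)) := by
      field_simp
    rw [← this, mul_pow]
    have h4 : (0:ℝ) ≤ ((N:ℝ)/d)^2 := by positivity
    nlinarith [hK]
  have hmain : ((N : ℝ) / d) * m ≥ Real.sqrt (((N : ℝ) - d) / ((d:ℝ) * ((N : ℝ) - 1))) := by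
    have := Real.sqrt_le_sqrt hsq
    rwa [Real.sqrt_sq (by positivity)] at this
  refine ⟨hmain, ?_, ?_⟩
  · -- equality → equiangular
    intro heq
    have hm2 : m ^ 2 = (d:ℝ) * ((N:ℝ) - d) / ((N:ℝ) * (N:ℝ) * ((N:ℝ) - 1)) := by
      have h1 : ((N:ℝ)/d * m) ^ 2 = ((N:ℝ) - d) / ((d:ℝ) * ((N:ℝ) - 1)) := by
        rw [heq, Real.sq_sqrt hR0]
      have h2 : ((N:ℝ)/d)^2 * m^2 = ((N:ℝ) - d) / ((d:ℝ) * ((N:ℝ) - 1)) := by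
        rw [← mul_pow]; exact h1
      have h3 : ((N:ℝ)/d)^2 ≠ 0 := by positivity
      field_simp at h2 ⊢
      nlinarith [h2]
    -- sum of off-diag squares equals card * m^2
    have hsumeq : ∑ p ∈ (Finset.univ : Finset (Fin N)).offDiag, (m ^ 2 - g p ^ 2) = 0 := by
      rw [Finset.sum_sub_distrib, Finset.sum_const, nsmul_eq_mul, hoff, hcard, hm2]
      field_simp
      ring
    have hall : ∀ p ∈ (Finset.univ : Finset (Fin N)).offDiag, m ^ 2 - g p ^ 2 = 0 := by
      rw [← Finset.sum_eq_zero_iff_of_nonneg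
        (fun p hp => by nlinarith [hgle p hp, hg0 p])]
      exact hsumeq
    refine ⟨m, fun i j hij => ?_⟩
    have hp : (i, j) ∈ (Finset.univ : Finset (Fin N)).offDiag := by
      rw [Finset.mem_offDiag]; exact ⟨Finset.mem_univ _, Finset.mem_univ _, hij⟩
    have := hall (i, j) hp
    have hgm : g (i, j) ^ 2 = m ^ 2 := by linarith
    have := congrArg Real.sqrt hgm
    rwa [Real.sqrt_sq (hg0 _), Real.sqrt_sq hm0] at this
  · -- equiangular → equality
    rintro ⟨c, hc⟩
    have hTc : T = {c} := by
      ext x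
      simp only [hT, Set.mem_setOf_eq, Set.mem_singleton_iff]
      constructor
      · rintro ⟨k, l, hkl, rfl⟩; exact hc k l hkl
      · rintro rfl; exact ⟨i0, i1, hi01, (hc i0 i1 hi01).symm⟩
    have hmc : m = c := by rw [hm, hTc, csSup_singleton]
    have hc0 : 0 ≤ c := hmc ▸ hm0
    have hceq : ∀ p ∈ (Finset.univ : Finset (Fin N)).offDiag, g p ^ 2 = c ^ 2 := by
      intro p hp
      rw [Finset.mem_offDiag] at hp
      rw [show g p = ‖(inner 𝕜 (f p.1) (f p.2) : 𝕜)‖ from rfl, hc p.1 p.2 hp.2.2]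
    have hc2 : ((N:ℝ) * (N:ℝ) - N) * c ^ 2 = (d:ℝ) * ((N:ℝ) - d) / N := by
      rw [← hoff, Finset.sum_congr rfl hceq, Finset.sum_const, nsmul_eq_mul, hcard]
    have hc2' : c ^ 2 = (d:ℝ) * ((N:ℝ) - d) / ((N:ℝ) * (N:ℝ) * ((N:ℝ) - 1)) := by
      have hNN : (N:ℝ) * (N:ℝ) - N = (N:ℝ) * ((N:ℝ) - 1) := by ring
      rw [hNN] at hc2
      field_simp at hc2 ⊢
      nlinarith [hc2]
    have hfin : (((N:ℝ)/d) * c) ^ 2 = ((N:ℝ) - d) / ((d:ℝ) * ((N:ℝ) - 1)) := by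
      rw [mul_pow, hc2']
      field_simp
    rw [hmc, ← hfin, Real.sqrt_sq (by positivity)]
end

section
/- Two Parseval frames {f_i} and {g_i} for H (with analysis operators V and W) satisfy g_i = U f_i for all i for some unitary U : H → H if and only if VV* = WW*, i.e., they have the same Grammian. -/
open scoped InnerProductSpace

/-- Reconstruction formula for a Parseval frame. -/
lemma parseval_recon
    {𝕜 : Type*} [RCLike 𝕜] {H : Type*} [NormedAddCommGroup H] [InnerProductSpace 𝕜 H]
    {N : ℕ} (f : Fin N → H)
    (hf : ∀ x : H, ∑ i : Fin N, ‖(inner 𝕜 (f i) x : 𝕜)‖ ^ 2 = ‖x‖ ^ 2) :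
    ∀ x : H, ∑ i : Fin N, (inner 𝕜 (f i) x : 𝕜) • f i = x := by
  set S : H →ₗ[𝕜] H :=
    { toFun := fun x => ∑ i : Fin N, (inner 𝕜 (f i) x : 𝕜) • f i
      map_add' := by
        intro x y
        simp [inner_add_right, add_smul, Finset.sum_add_distrib]
      map_smul' := by
        intro c x
        simp [inner_smul_right, mul_smul, Finset.smul_sum] } with hS
  have hSapp : ∀ x, S x = ∑ i : Fin N, (inner 𝕜 (f i) x : 𝕜) • f i := fun _ => rfl
  have hsym : (S - (LinearMap.id : H →ₗ[𝕜] H)).IsSymmetric := by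
    apply LinearMap.IsSymmetric.sub _ (LinearMap.IsSymmetric.id)
    intro x y
    simp only [hSapp, sum_inner, inner_sum, inner_smul_left, inner_smul_right]
    congr 1
    ext i
    rw [← inner_conj_symm x (f i)]
    ring
  have hz : S - (LinearMap.id : H →ₗ[𝕜] H) = 0 := by
    rw [← hsym.inner_map_self_eq_zero]
    intro x
    have h1 : (inner 𝕜 ((S - (LinearMap.id : H →ₗ[𝕜] H)) x) x : 𝕜) = inner 𝕜 (S x) x - inner 𝕜 x x := by
      simp [inner_sub_left]
    rw [h1, hSapp]
    have h2 : (inner 𝕜 (∑ i : Fin N, (inner 𝕜 (f i) x : 𝕜) • f i) x : 𝕜)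
        = ((∑ i : Fin N, ‖(inner 𝕜 (f i) x : 𝕜)‖ ^ 2 : ℝ) : 𝕜) := by
      rw [sum_inner, RCLike.ofReal_sum]
      refine Finset.sum_congr rfl fun i _ => ?_
      rw [inner_smul_left, RCLike.conj_mul]
      norm_cast
    rw [h2, hf x, inner_self_eq_norm_sq_to_K]
    push_cast
    ring
  intro x
  have := LinearMap.congr_fun hz x
  simpa [sub_eq_zero, hSapp] using this

/-- Two Parseval frames are related by a unitary (`g i = U f i` for all `i`)
if and only if they have the same Grammian. -/
theorem typeI_equiv_iff_same_grammian
    {𝕜 : Type*} [RCLike 𝕜] {H : Type*} [NormedAddCommGroup H] [InnerProductSpace 𝕜 H]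
    [FiniteDimensional 𝕜 H] {N : ℕ} (f g : Fin N → H)
    (hf : ∀ x : H, ∑ i : Fin N, ‖(inner 𝕜 (f i) x : 𝕜)‖ ^ 2 = ‖x‖ ^ 2)
    (hg : ∀ x : H, ∑ i : Fin N, ‖(inner 𝕜 (g i) x : 𝕜)‖ ^ 2 = ‖x‖ ^ 2) :
    (∃ U : H ≃ₗᵢ[𝕜] H, ∀ i, g i = U (f i)) ↔
      (∀ i j, (inner 𝕜 (f i) (f j) : 𝕜) = inner 𝕜 (g i) (g j)) := by
  constructor
  · rintro ⟨U, hU⟩ i j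
    rw [hU i, hU j, LinearIsometryEquiv.inner_map_map]
  · intro hgram
    set T : H →ₗ[𝕜] H :=
      { toFun := fun x => ∑ i : Fin N, (inner 𝕜 (f i) x : 𝕜) • g i
        map_add' := by
          intro x y
          simp [inner_add_right, add_smul, Finset.sum_add_distrib]
        map_smul' := by
          intro c x
          simp [inner_smul_right, mul_smul, Finset.smul_sum] } with hT
    have hTapp : ∀ x, T x = ∑ i : Fin N, (inner 𝕜 (f i) x : 𝕜) • g i := fun _ => rfl
    have hfr := parseval_recon f hf
    have hgr := parseval_recon g hg
    have hinner : ∀ x y : H, (inner 𝕜 (T x) (T y) : 𝕜) = inner 𝕜 x y := by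
      intro x y
      conv_rhs => rw [← hfr x, ← hfr y]
      rw [hTapp, hTapp]
      simp only [sum_inner, inner_sum, inner_smul_left, inner_smul_right, hgram]
    have hinj : Function.Injective T := by
      intro x y hxy
      have : (inner 𝕜 (x - y) (x - y) : 𝕜) = 0 := by
        rw [← hinner, map_sub, hxy, sub_self, inner_zero_left]
      exact sub_eq_zero.mp (inner_self_eq_zero.mp this)
    refine ⟨LinearEquiv.isometryOfInner (LinearEquiv.ofInjectiveEndo T hinj) ?_, ?_⟩
    · intro x y
      simpa using hinner x y
    · intro i
      have : T (f i) = g i := by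
        rw [hTapp]
        calc ∑ j : Fin N, (inner 𝕜 (f j) (f i) : 𝕜) • g j
            = ∑ j : Fin N, (inner 𝕜 (g j) (g i) : 𝕜) • g j := by
              congr 1; ext j; rw [hgram]
          _ = g i := hgr (g i)
      simp [LinearEquiv.isometryOfInner, LinearEquiv.ofInjectiveEndo, this]
      exact this.symm
end

section
/- Let {f_1,f_2,f_3,f_4} be the (4,3)-frame with vectors (1/2)(±1,±1,±1) having an even number of minus signs replaced appropriately (i.e., (1/2)(1,1,1), (1/2)(−1,−1,1), (1/2)(−1,1,−1), (1/2)(1,−1,−1)), and let e_1,e_2,e_3 be the standard basis of R³. Then the seven vectors √(4/7)·f_i (i=1..4) and √(3/7)·e_j (j=1..3) form a uniform Parseval frame for R³ whose maximum correlation is M_∞ = √3/3, i.e., max_{k≠l} |⟨v_k,v_l⟩| = √3/7 and all vectors have norm √(3/7). -/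
theorem vec7_app_0 {α : Type*} (a0 a1 a2 a3 a4 a5 a6 : α) : ![a0,a1,a2,a3,a4,a5,a6] (0:Fin 7) = a0 := rfl
theorem vec7_app_1 {α : Type*} (a0 a1 a2 a3 a4 a5 a6 : α) : ![a0,a1,a2,a3,a4,a5,a6] (1:Fin 7) = a1 := rfl
theorem vec7_app_2 {α : Type*} (a0 a1 a2 a3 a4 a5 a6 : α) : ![a0,a1,a2,a3,a4,a5,a6] (2:Fin 7) = a2 := rfl
theorem vec7_app_3 {α : Type*} (a0 a1 a2 a3 a4 a5 a6 : α) : ![a0,a1,a2,a3,a4,a5,a6] (3:Fin 7) = a3 := rfl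
theorem vec7_app_4 {α : Type*} (a0 a1 a2 a3 a4 a5 a6 : α) : ![a0,a1,a2,a3,a4,a5,a6] (4:Fin 7) = a4 := rfl
theorem vec7_app_5 {α : Type*} (a0 a1 a2 a3 a4 a5 a6 : α) : ![a0,a1,a2,a3,a4,a5,a6] (5:Fin 7) = a5 := rfl
theorem vec7_app_6 {α : Type*} (a0 a1 a2 a3 a4 a5 a6 : α) : ![a0,a1,a2,a3,a4,a5,a6] (6:Fin 7) = a6 := rfl


set_option maxHeartbeats 2000000 in
/-- The seven vectors `√(4/7)·f_i` (the four cube-vertex frame vectors) together with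
`√(3/7)·e_j` (the standard basis) form a uniform Parseval frame for `R³` with all norms
`√(3/7)`, largest cross inner product `√3/7`, and maximum correlation
`M_∞ = (7/3)·(√3/7) = √3/3`. -/
theorem seven_three_frame
    (v : Fin 7 → EuclideanSpace ℝ (Fin 3))
    (hv : v = fun (k : Fin 7) => (WithLp.equiv 2 (Fin 3 → ℝ)).symm
      (![Real.sqrt (4 / 7) • ((1 / 2 : ℝ) • ![1, 1, 1]),
         Real.sqrt (4 / 7) • ((1 / 2 : ℝ) • ![-1, -1, 1]),
         Real.sqrt (4 / 7) • ((1 / 2 : ℝ) • ![-1, 1, -1]),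
         Real.sqrt (4 / 7) • ((1 / 2 : ℝ) • ![1, -1, -1]),
         Real.sqrt (3 / 7) • ![1, 0, 0],
         Real.sqrt (3 / 7) • ![0, 1, 0],
         Real.sqrt (3 / 7) • ![0, 0, 1]] k)) :
    (∀ x : EuclideanSpace ℝ (Fin 3), ∑ k : Fin 7, (inner ℝ x (v k) : ℝ) ^ 2 = ‖x‖ ^ 2) ∧
    (∀ k, ‖v k‖ = Real.sqrt (3 / 7)) ∧
    IsGreatest {x : ℝ | ∃ k l : Fin 7, k ≠ l ∧ x = |(inner ℝ (v k) (v l) : ℝ)|}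
      (Real.sqrt 3 / 7) ∧
    (7 / 3 : ℝ) * (Real.sqrt 3 / 7) = Real.sqrt 3 / 3 := by
  subst hv
  set A := Real.sqrt (4/7) with hA
  set B := Real.sqrt (3/7) with hB
  have hA2 : A ^ 2 = 4/7 := Real.sq_sqrt (by norm_num)
  have hB2 : B ^ 2 = 3/7 := Real.sq_sqrt (by norm_num)
  have hApos : (0:ℝ) ≤ A := Real.sqrt_nonneg _
  have hBpos : (0:ℝ) ≤ B := Real.sqrt_nonneg _
  have h3 : Real.sqrt 3 ^ 2 = 3 := Real.sq_sqrt (by norm_num)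
  have h3nn : (0:ℝ) ≤ Real.sqrt 3 := Real.sqrt_nonneg 3
  have h3ge : (1:ℝ) ≤ Real.sqrt 3 := by nlinarith
  have hAB : A * B = 2 * Real.sqrt 3 / 7 := by
    rw [hA, hB, ← Real.sqrt_mul (by norm_num)]
    rw [show (4/7 : ℝ) * (3/7) = (2/7)^2 * 3 by norm_num]
    rw [Real.sqrt_mul (by positivity), Real.sqrt_sq (by norm_num)]
    ring
  refine ⟨?_, ?_, ⟨⟨0, 4, by decide, ?_⟩, ?_⟩, ?_⟩
  · intro x
    have hx : ‖x‖ ^ 2 = x 0 ^ 2 + x 1 ^ 2 + x 2 ^ 2 := by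
      rw [← real_inner_self_eq_norm_sq]
      simp only [PiLp.inner_apply, RCLike.inner_apply, Fin.sum_univ_three, conj_trivial]
      ring
    rw [hx]
    simp only [PiLp.inner_apply, RCLike.inner_apply, Fin.sum_univ_three, Fin.sum_univ_seven,
      WithLp.equiv_symm_apply, PiLp.toLp_apply, Matrix.cons_val_zero, Matrix.cons_val_one, Matrix.head_cons,
      Matrix.cons_val_two, Matrix.cons_val_three, Matrix.cons_val_four, Matrix.tail_cons,
      Pi.smul_apply, smul_eq_mul, conj_trivial, vec7_app_0, vec7_app_1, vec7_app_2, vec7_app_3, vec7_app_4, vec7_app_5, vec7_app_6]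
    
    linear_combination (((x 0 + x 1 + x 2)/2)^2 + ((-x 0 - x 1 + x 2)/2)^2
      + ((-x 0 + x 1 - x 2)/2)^2 + ((x 0 - x 1 - x 2)/2)^2) * hA2
      + (x 0 ^ 2 + x 1 ^ 2 + x 2 ^ 2) * hB2
  · intro k
    have hk : ‖(fun (k : Fin 7) => (WithLp.equiv 2 (Fin 3 → ℝ)).symm
      (![A • ((1 / 2 : ℝ) • ![1, 1, 1]),
         A • ((1 / 2 : ℝ) • ![-1, -1, 1]),
         A • ((1 / 2 : ℝ) • ![-1, 1, -1]),
         A • ((1 / 2 : ℝ) • ![1, -1, -1]),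
         B • ![1, 0, 0], B • ![0, 1, 0], B • ![0, 0, 1]] k)) k‖ ^ 2 = 3/7 := by
      rw [← real_inner_self_eq_norm_sq]
      fin_cases k <;>
        simp [PiLp.inner_apply, RCLike.inner_apply, Fin.sum_univ_three,
          WithLp.equiv_symm_apply, PiLp.toLp_apply, vec7_app_0, vec7_app_1, vec7_app_2, vec7_app_3, vec7_app_4, vec7_app_5, vec7_app_6, -inner_self_eq_norm_sq_to_K] <;>
        nlinarith [hA2, hB2]
    have := Real.sqrt_sq (norm_nonneg ((fun (k : Fin 7) => (WithLp.equiv 2 (Fin 3 → ℝ)).symm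
      (![A • ((1 / 2 : ℝ) • ![1, 1, 1]),
         A • ((1 / 2 : ℝ) • ![-1, -1, 1]),
         A • ((1 / 2 : ℝ) • ![-1, 1, -1]),
         A • ((1 / 2 : ℝ) • ![1, -1, -1]),
         B • ![1, 0, 0], B • ![0, 1, 0], B • ![0, 0, 1]] k)) k))
    rw [← this, hk, hB]
  · -- membership: inner (v 0) (v 4) = √3/7
    simp [PiLp.inner_apply, RCLike.inner_apply, Fin.sum_univ_three,
      WithLp.equiv_symm_apply, PiLp.toLp_apply, vec7_app_0, vec7_app_1, vec7_app_2, vec7_app_3, vec7_app_4, vec7_app_5, vec7_app_6]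
    rw [abs_of_nonneg (by positivity)]
    rw [abs_of_nonneg hApos]
    nlinarith [hAB]
  · rintro x ⟨k, l, hkl, rfl⟩
    rw [abs_le]
    fin_cases k <;> fin_cases l <;>
      first
        | exact absurd rfl hkl
        | (simp [PiLp.inner_apply, RCLike.inner_apply, Fin.sum_univ_three,
             WithLp.equiv_symm_apply, PiLp.toLp_apply, vec7_app_0, vec7_app_1, vec7_app_2, vec7_app_3, vec7_app_4, vec7_app_5, vec7_app_6]
           first
             | positivity
             | (constructor <;> nlinarith [hA2, hB2, hAB, h3ge, h3nn, hApos, hBpos]))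
  · ring
end
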